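/- arXiv:0712.3523 — 6 statements merged into one kernel-verified Lean document; each statement's English description precedes it below -/
import Mathlib

section
/- Let M be a right R-module and N an (R,R)-bimodule, {d^M_n} a Δ-higher derivation on M and {d^N_n} a Δ-higher derivation on N (with respect to both module structures of N). Then the family of additive maps d^{M⊗N}_n on M ⊗_R N determined by d^{M⊗N}_n(m ⊗ x) = Σ_{i=0}^{n} d^M_i(m) ⊗ d^N_{n-i}(x) is a Δ-higher derivation on the right R-module M ⊗_R N, i.e. d^{M⊗N}_n((m⊗x)·r) = Σ_{i=0}^{n} d^{M⊗N}_i(m⊗x)·δ_{n-i}(r) for all r ∈ R. -/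
open Finset MulOpposite

private lemma triple_sum_reindex {P : Type*} [AddCommMonoid P] (n : ℕ) (f : ℕ → ℕ → ℕ → P) :
    ∑ i ∈ Finset.range (n+1), ∑ j ∈ Finset.range (n-i+1), f i j (n-i-j)
      = ∑ i ∈ Finset.range (n+1), ∑ j ∈ Finset.range (i+1), f j (i-j) (n-i) := by
  rw [Finset.sum_sigma', Finset.sum_sigma']
  apply Finset.sum_nbij' (fun p => ⟨p.1 + p.2, p.1⟩) (fun p => ⟨p.2, p.1 - p.2⟩)
  · rintro ⟨a, b⟩ h
    simp only [Finset.mem_sigma, Finset.mem_range] at h ⊢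
    omega
  · rintro ⟨a, b⟩ h
    simp only [Finset.mem_sigma, Finset.mem_range] at h ⊢
    omega
  · rintro ⟨a, b⟩ h
    simp only [Nat.add_sub_cancel_left]
  · rintro ⟨a, b⟩ h
    simp only [Finset.mem_sigma, Finset.mem_range] at h
    have hb : b + (a - b) = a := by omega
    rw [hb]
  · rintro ⟨a, b⟩ h
    simp only [Nat.add_sub_cancel_left, Nat.sub_sub]

/-- Higher derivation on a tensor product `M ⊗_R N` of a right `R`-module `M`
(formalized as `Rᵐᵒᵖ`-module) and an `(R,R)`-bimodule `N`.  Since Mathlib's tensor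
product requires a commutative base ring, the tensor product is abstracted as a
right `R`-module `P` together with a balanced biadditive map `t : M → N → P`
(the pure-tensor map, `t m x = m ⊗ x`) which is right `R`-linear in the sense
`(m ⊗ x)·r = m ⊗ (x·r)`.  If `D_n` is determined on pure tensors by
`D_n(m ⊗ x) = Σ_{i≤n} d^M_i(m) ⊗ d^N_{n-i}(x)`, then `D` satisfies the higher
Leibniz rule `D_n((m⊗x)·r) = Σ_{i≤n} D_i(m⊗x)·δ_{n-i}(r)`. -/
theorem tensor_higherDerivation {R M N P : Type*} [Ring R]
    [AddCommGroup M] [Module Rᵐᵒᵖ M]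
    [AddCommGroup N] [Module R N] [Module Rᵐᵒᵖ N] [SMulCommClass R Rᵐᵒᵖ N]
    [AddCommGroup P] [Module Rᵐᵒᵖ P]
    (δ : ℕ → R → R) (dM : ℕ → M → M) (dN : ℕ → N → N) (D : ℕ → P → P)
    (t : M → N → P)
    (htadd₁ : ∀ (m m' : M) (x : N), t (m + m') x = t m x + t m' x)
    (htadd₂ : ∀ (m : M) (x x' : N), t m (x + x') = t m x + t m x')
    (htbal : ∀ (m : M) (x : N) (r : R), t (op r • m) x = t m (r • x))
    (htr : ∀ (m : M) (x : N) (r : R), op r • t m x = t m (op r • x))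
    (hδadd : ∀ (n : ℕ) (a b : R), δ n (a + b) = δ n a + δ n b)
    (hδ0 : ∀ r : R, δ 0 r = r)
    (hδleib : ∀ (i : ℕ) (r s : R), δ i (r * s) = ∑ j ∈ range (i + 1), δ j r * δ (i - j) s)
    (hdMadd : ∀ (n : ℕ) (x y : M), dM n (x + y) = dM n x + dM n y)
    (hdM0 : ∀ x : M, dM 0 x = x)
    (hdMleib : ∀ (i : ℕ) (x : M) (r : R),
      dM i (op r • x) = ∑ j ∈ range (i + 1), op (δ (i - j) r) • dM j x)
    (hdNadd : ∀ (n : ℕ) (x y : N), dN n (x + y) = dN n x + dN n y)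
    (hdN0 : ∀ x : N, dN 0 x = x)
    (hdNleibr : ∀ (i : ℕ) (x : N) (r : R),
      dN i (op r • x) = ∑ j ∈ range (i + 1), op (δ (i - j) r) • dN j x)
    (hdNleibl : ∀ (i : ℕ) (x : N) (r : R),
      dN i (r • x) = ∑ j ∈ range (i + 1), δ j r • dN (i - j) x)
    (hDadd : ∀ (n : ℕ) (p p' : P), D n (p + p') = D n p + D n p')
    (hDdef : ∀ (n : ℕ) (m : M) (x : N),
      D n (t m x) = ∑ i ∈ range (n + 1), t (dM i m) (dN (n - i) x)) :
    ∀ (n : ℕ) (m : M) (x : N) (r : R),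
      D n (op r • t m x) = ∑ i ∈ range (n + 1), op (δ (n - i) r) • D i (t m x) := by
  intro n m x r
  rw [htr, hDdef]
  have key : ∀ i ∈ Finset.range (n+1), t (dM i m) (dN (n - i) (op r • x))
      = ∑ j ∈ Finset.range (n - i + 1), op (δ (n - i - j) r) • t (dM i m) (dN j x) := by
    intro i _
    rw [hdNleibr,
      show t (dM i m) = ⇑(AddMonoidHom.mk' (t (dM i m)) (htadd₂ (dM i m))) from rfl, map_sum]
    exact Finset.sum_congr rfl fun j _ => (htr _ _ _).symm
  rw [Finset.sum_congr rfl key]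
  simp only [hDdef, Finset.smul_sum]
  exact triple_sum_reindex n (fun a b c => op (δ c r) • t (dM a m) (dN b x))
end

section
/- Let R be a ring, {δ_n} a higher derivation on R, M a right R-module, and {d_n} a Δ-higher derivation on M. Suppose that for every x ∈ M with dense right annihilator, and every i < n, the annihilators ann_r(d_i(x)) are dense. Then ann_r(d_n(x)) is dense. Consequently, the set of elements of M with dense right annihilator (the Lambek torsion submodule) is closed under every d_n. -/
open Finset MulOpposite

/-- A right ideal (here: an arbitrary subset) `I` of `R` is dense if for all `r, s ∈ R`
with `s ≠ 0` there is `t` with `st ≠ 0` and `rt ∈ I`. -/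
def IsDenseRightIdeal {R : Type*} [Ring R] (I : Set R) : Prop :=
  ∀ r s : R, s ≠ 0 → ∃ t : R, s * t ≠ 0 ∧ r * t ∈ I

/-- If `ann_r(d_i x)` is dense for all `i < n` (and `ann_r x` is dense), then
`ann_r(d_n x)` is dense; consequently the Lambek torsion submodule is closed under
every `d_n`.  Right modules are formalized as `Rᵐᵒᵖ`-modules, `x·r = op r • x`. -/
theorem lambekTorsion_closed_under_higherDerivation {R M : Type*} [Ring R]
    [AddCommGroup M] [Module Rᵐᵒᵖ M]
    (δ : ℕ → R → R) (d : ℕ → M → M)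
    (hδadd : ∀ (n : ℕ) (a b : R), δ n (a + b) = δ n a + δ n b)
    (hδ0 : ∀ r : R, δ 0 r = r)
    (hδleib : ∀ (i : ℕ) (r s : R), δ i (r * s) = ∑ j ∈ range (i + 1), δ j r * δ (i - j) s)
    (hdadd : ∀ (n : ℕ) (x y : M), d n (x + y) = d n x + d n y)
    (hd0 : ∀ x : M, d 0 x = x)
    (hdleib : ∀ (i : ℕ) (x : M) (r : R),
      d i (op r • x) = ∑ j ∈ range (i + 1), op (δ (i - j) r) • d j x) :
    (∀ (n : ℕ) (x : M), IsDenseRightIdeal {r : R | op r • x = 0} →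
      (∀ i < n, IsDenseRightIdeal {r : R | op r • d i x = 0}) →
      IsDenseRightIdeal {r : R | op r • d n x = 0}) ∧
    (∀ x : M, IsDenseRightIdeal {r : R | op r • x = 0} →
      ∀ n : ℕ, IsDenseRightIdeal {r : R | op r • d n x = 0}) := by
  have key : ∀ (n : ℕ) (x : M), IsDenseRightIdeal {r : R | op r • x = 0} →
      (∀ i < n, IsDenseRightIdeal {r : R | op r • d i x = 0}) →
      IsDenseRightIdeal {r : R | op r • d n x = 0} := by
    intro n x hx hind r s hs
    -- step 1: get t0 with s*t0 ≠ 0 and u := r*t0 annihilating x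
    obtain ⟨t0, hst0, hu⟩ := hx r s hs
    set u := r * t0 with hu_def
    have hux : op u • x = 0 := hu
    have hdn0 : d n (0 : M) = 0 := by
      have h := hdadd n 0 0
      simpa using h.symm
    -- key formula
    have hformula : op u • d n x = -∑ j ∈ range n, op (δ (n - j) u) • d j x := by
      have h1 : d n (op u • x) = 0 := by rw [hux, hdn0]
      have h2 := hdleib n x u
      rw [h1, sum_range_succ, Nat.sub_self, hδ0] at h2
      exact eq_neg_of_add_eq_zero_right h2.symm
    -- auxiliary density of the intersection of pullbacks
    have haux : ∀ m : ℕ, (∀ j < m, IsDenseRightIdeal {r : R | op r • d j x = 0}) →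
        ∀ (r' s' : R), s' ≠ 0 →
          ∃ t, s' * t ≠ 0 ∧ ∀ j < m, op (δ (n - j) u * (r' * t)) • d j x = 0 := by
      intro m
      induction m with
      | zero =>
        intro _ r' s' hs'
        exact ⟨1, by simpa using hs', fun j hj => absurd hj (Nat.not_lt_zero j)⟩
      | succ m ih =>
        intro hdm r' s' hs'
        obtain ⟨t1, hst1, ht1⟩ := ih (fun j hj => hdm j (hj.trans (Nat.lt_succ_self m))) r' s' hs'
        obtain ⟨t2, hst2, ht2⟩ :=
          hdm m (Nat.lt_succ_self m) (δ (n - m) u * (r' * t1)) (s' * t1) hst1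
        refine ⟨t1 * t2, by rwa [← mul_assoc], fun j hj => ?_⟩
        have hj := Nat.lt_succ_iff_lt_or_eq.mp hj
        have hassoc : δ (n - j) u * (r' * (t1 * t2)) = δ (n - j) u * (r' * t1) * t2 := by
          rw [← mul_assoc r' t1 t2, ← mul_assoc]
        rcases hj with hj | hj
        · have h := ht1 j hj
          rw [hassoc, op_mul, mul_smul, h, smul_zero]
        · subst hj
          rw [hassoc]
          exact ht2
    obtain ⟨t', hst', ht'⟩ := haux n hind 1 (s * t0) hst0
    refine ⟨t0 * t', by rwa [← mul_assoc], ?_⟩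
    show op (r * (t0 * t')) • d n x = 0
    have hrt : r * (t0 * t') = u * t' := by rw [hu_def, mul_assoc]
    rw [hrt, op_mul, mul_smul, hformula, smul_neg, Finset.smul_sum]
    have : ∀ j ∈ range n, op t' • op (δ (n - j) u) • d j x = 0 := by
      intro j hj
      have h := ht' j (mem_range.mp hj)
      rw [one_mul] at h
      rw [← mul_smul, ← op_mul]
      exact h
    rw [Finset.sum_congr rfl this, Finset.sum_const_zero, neg_zero]
  refine ⟨key, ?_⟩
  intro x hx n
  induction n using Nat.strong_induction_on with
  | _ n ih => exact key n x hx ih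
end

section
/- Let R be a ring with derivation δ, M a right R-module, and d a δ-derivation on M. If x ∈ M has dense right annihilator, then d(x) has dense right annihilator. -/
open MulOpposite

/-- If `d` is a `δ`-derivation on a right `R`-module `M` (formalized as an
`Rᵐᵒᵖ`-module) and `x ∈ M` has dense right annihilator, then so does `d x`. -/
theorem denseAnnihilator_derivation {R M : Type*} [Ring R]
    [AddCommGroup M] [Module Rᵐᵒᵖ M]
    (δ : R → R) (d : M → M)
    (hδadd : ∀ a b : R, δ (a + b) = δ a + δ b)
    (hδleib : ∀ a b : R, δ (a * b) = δ a * b + a * δ b)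
    (hdadd : ∀ x y : M, d (x + y) = d x + d y)
    (hdleib : ∀ (x : M) (r : R), d (op r • x) = op r • d x + op (δ r) • x)
    (x : M) (hx : IsDenseRightIdeal {r : R | op r • x = 0}) :
    IsDenseRightIdeal {r : R | op r • d x = 0} := by
  have hd0 : d 0 = 0 := by
    have h := hdadd 0 0
    rw [add_zero] at h
    exact right_eq_add.mp h
  intro r s hs
  obtain ⟨t₁, hst₁, hrt₁⟩ := hx r s hs
  have key : op (r * t₁) • d x = - (op (δ (r * t₁)) • x) := by
    have h := hdleib x (r * t₁)
    rw [Set.mem_setOf_eq] at hrt₁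
    rw [hrt₁, hd0] at h
    exact eq_neg_of_add_eq_zero_left h.symm
  obtain ⟨t₂, hst₂, hδt₂⟩ := hx (δ (r * t₁)) (s * t₁) hst₁
  refine ⟨t₁ * t₂, by rwa [← mul_assoc], ?_⟩
  show op (r * (t₁ * t₂)) • d x = 0
  have : op (r * (t₁ * t₂)) • d x = op t₂ • (op (r * t₁) • d x) := by
    rw [smul_smul, ← op_mul]; rw [mul_assoc]
  rw [this, key, smul_neg, smul_smul, ← op_mul]
  rw [Set.mem_setOf_eq] at hδt₂
  rw [hδt₂, neg_zero]
end

section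
/- Let f : R → S be a ring homomorphism making S a flat epimorphic extension in the following sense: for every r ∈ ker f there exist finitely many r_1,…,r_m ∈ R and q_1,…,q_m ∈ S with r·r_j = 0 for all j and Σ_j f(r_j)q_j = 1. If {δ_n} is a higher derivation on R, then f(δ_n(r)) = 0 for every r ∈ ker f and every n; i.e. ker f is invariant under every δ_n modulo ker f (δ_n(ker f) ⊆ ker f). -/
open Finset

/-- If `f : R → S` is a flat epimorphic (perfect) ring extension, i.e. every
`r ∈ ker f` admits a finite flatness witness `r_1,…,r_m ∈ R`, `q_1,…,q_m ∈ S` with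
`r·r_j = 0` and `Σ_j f(r_j)q_j = 1`, then `ker f` is invariant under every member
of a higher derivation `{δ_n}` on `R`. -/
theorem ker_invariant_of_flat_epi {R S : Type*} [Ring R] [Ring S]
    (f : R →+* S)
    (hflat : ∀ r : R, f r = 0 →
      ∃ (m : ℕ) (rs : Fin m → R) (qs : Fin m → S),
        (∀ j, r * rs j = 0) ∧ (∑ j, f (rs j) * qs j = 1))
    (δ : ℕ → R → R)
    (hadd : ∀ (n : ℕ) (a b : R), δ n (a + b) = δ n a + δ n b)
    (h0 : ∀ r : R, δ 0 r = r)
    (hleib : ∀ (n : ℕ) (r s : R), δ n (r * s) = ∑ i ∈ range (n + 1), δ i r * δ (n - i) s) :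
    ∀ r : R, f r = 0 → ∀ n : ℕ, f (δ n r) = 0 := by
  have hzero : ∀ n, δ n 0 = 0 := by
    intro n
    have := hadd n 0 0
    simpa using this
  intro r hr
  obtain ⟨m, rs, qs, hann, hone⟩ := hflat r hr
  intro n
  induction n using Nat.strong_induction_on with
  | _ n ih =>
    have key : ∀ j, f (δ n r * rs j) = 0 := by
      intro j
      have h1 : δ n (r * rs j) = ∑ i ∈ range (n + 1), δ i r * δ (n - i) (rs j) :=
        hleib n r (rs j)
      rw [hann j, hzero] at h1
      have h2 : (0 : R) = (∑ i ∈ range n, δ i r * δ (n - i) (rs j))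
          + δ n r * δ 0 (rs j) := by
        rw [h1, Finset.sum_range_succ, Nat.sub_self]
      have h3 : δ n r * rs j
          = -(∑ i ∈ range n, δ i r * δ (n - i) (rs j)) := by
        rw [h0] at h2
        rw [eq_comm, add_comm] at h2
        exact eq_neg_of_add_eq_zero_left h2
      rw [h3]
      rw [map_neg, map_sum]
      have : ∀ i ∈ range n, f (δ i r * δ (n - i) (rs j)) = 0 := by
        intro i hi
        rw [map_mul, ih i (mem_range.mp hi), zero_mul]
      rw [Finset.sum_eq_zero this, neg_zero]
    calc f (δ n r) = f (δ n r) * ∑ j, f (rs j) * qs j := by rw [hone, mul_one]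
      _ = ∑ j, f (δ n r * rs j) * qs j := by
          rw [Finset.mul_sum]
          refine Finset.sum_congr rfl fun j _ => by rw [map_mul, mul_assoc]
      _ = 0 := Finset.sum_eq_zero fun j _ => by rw [key j, zero_mul]
end

section
/- Let M, N be right R-modules with N torsion-free and M/q(M) torsion for a hereditary torsion theory τ (where q : M → N is an R-map with torsion kernel and cokernel). If two Δ-higher derivations {d'_n} and {d''_n} on N both extend a Δ-higher derivation {d_n} on M (i.e. d'_n ∘ q = q ∘ d_n = d''_n ∘ q for all n), then d'_n = d''_n for all n. In particular, extensions of higher derivations to modules of quotients are unique. -/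
open Finset MulOpposite

/-- Uniqueness of extensions of higher derivations to modules of quotients.
The hereditary torsion theory is given by its Gabriel filter `F` of right ideals
(formalized as subsets of `R`): an element `y` of a right module is torsion iff
`ann_r(y) ∈ F`.  Suppose `q : M → N` is an `R`-map with `N` torsion-free and
`N/q(M)` torsion.  If two `Δ`-higher derivations `{d'_n}`, `{d''_n}` on `N` both
extend a `Δ`-higher derivation `{d_n}` on `M`, then `d'_n = d''_n` for all `n`.
Right modules are formalized as `Rᵐᵒᵖ`-modules, `x·r = op r • x`. -/
theorem higherDerivation_extension_unique {R M N : Type*} [Ring R]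
    [AddCommGroup M] [Module Rᵐᵒᵖ M] [AddCommGroup N] [Module Rᵐᵒᵖ N]
    (F : Set (Set R))
    (hFtop : (Set.univ : Set R) ∈ F)
    (hFup : ∀ I ∈ F, ∀ J : Set R, I ⊆ J → J ∈ F)
    (hFinter : ∀ I ∈ F, ∀ J ∈ F, I ∩ J ∈ F)
    (hFquot : ∀ I ∈ F, ∀ r : R, {s : R | r * s ∈ I} ∈ F)
    (q : M →ₗ[Rᵐᵒᵖ] N)
    (hNtf : ∀ y : N, {r : R | op r • y = 0} ∈ F → y = 0)
    (hcoker : ∀ y : N, {r : R | ∃ m : M, op r • y = q m} ∈ F)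
    (δ : ℕ → R → R) (d : ℕ → M → M) (d' d'' : ℕ → N → N)
    (hδadd : ∀ (n : ℕ) (a b : R), δ n (a + b) = δ n a + δ n b)
    (hδ0 : ∀ r : R, δ 0 r = r)
    (hδleib : ∀ (i : ℕ) (r s : R), δ i (r * s) = ∑ j ∈ range (i + 1), δ j r * δ (i - j) s)
    (hdadd : ∀ (n : ℕ) (x y : M), d n (x + y) = d n x + d n y)
    (hd0 : ∀ x : M, d 0 x = x)
    (hdleib : ∀ (i : ℕ) (x : M) (r : R),
      d i (op r • x) = ∑ j ∈ range (i + 1), op (δ (i - j) r) • d j x)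
    (hd'add : ∀ (n : ℕ) (x y : N), d' n (x + y) = d' n x + d' n y)
    (hd'0 : ∀ x : N, d' 0 x = x)
    (hd'leib : ∀ (i : ℕ) (x : N) (r : R),
      d' i (op r • x) = ∑ j ∈ range (i + 1), op (δ (i - j) r) • d' j x)
    (hd''add : ∀ (n : ℕ) (x y : N), d'' n (x + y) = d'' n x + d'' n y)
    (hd''0 : ∀ x : N, d'' 0 x = x)
    (hd''leib : ∀ (i : ℕ) (x : N) (r : R),
      d'' i (op r • x) = ∑ j ∈ range (i + 1), op (δ (i - j) r) • d'' j x)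
    (hext' : ∀ (n : ℕ) (m : M), d' n (q m) = q (d n m))
    (hext'' : ∀ (n : ℕ) (m : M), d'' n (q m) = q (d n m)) :
    ∀ n : ℕ, d' n = d'' n := by
  intro n
  induction n using Nat.strong_induction_on with
  | _ n ih =>
    funext y
    have key : ∀ r : R, (∃ m : M, op r • y = q m) → op r • (d' n y - d'' n y) = 0 := by
      intro r ⟨m, hm⟩
      have h1 := hd'leib n y r
      have h2 := hd''leib n y r
      rw [hm, hext'] at h1
      rw [hm, hext''] at h2
      have h3 : (∑ j ∈ range (n + 1), op (δ (n - j) r) • d' j y)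
          = ∑ j ∈ range (n + 1), op (δ (n - j) r) • d'' j y := h1.symm.trans h2
      have hcong : (∑ j ∈ range n, op (δ (n - j) r) • d' j y)
          = ∑ j ∈ range n, op (δ (n - j) r) • d'' j y :=
        Finset.sum_congr rfl fun j hj => by rw [ih j (Finset.mem_range.mp hj)]
      rw [Finset.sum_range_succ, Finset.sum_range_succ, hcong] at h3
      have h4 : op (δ (n - n) r) • d' n y = op (δ (n - n) r) • d'' n y :=
        add_left_cancel h3
      rw [Nat.sub_self, hδ0] at h4
      rw [smul_sub, h4, sub_self]
    have hmem : {r : R | op r • (d' n y - d'' n y) = 0} ∈ F :=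
      hFup _ (hcoker y) _ (fun r hr => key r hr)
    have := hNtf _ hmem
    exact sub_eq_zero.mp this
end

section
/- Let 𝔉 be a higher differential Gabriel filter of order n on R (for every higher derivation of order n and every I ∈ 𝔉 there is J ∈ 𝔉 with δ_i(J) ⊆ I for all i ≤ n). Then for every right R-module M, every higher derivation {δ_i}_{i≤n} on R, every Δ-higher derivation {d_i}_{i≤n} on M, and every x ∈ M with ann_r(x) ∈ 𝔉, also ann_r(d_i(x)) ∈ 𝔉 for all i ≤ n; i.e. d_i(𝕋(M)) ⊆ 𝕋(M). -/
open Finset MulOpposite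

/-- `δ` is a higher derivation of order `n` on `R`. -/
def IsHigherDerivationOfOrder {R : Type*} [Ring R] (n : ℕ) (δ : ℕ → R → R) : Prop :=
  (∀ i ≤ n, ∀ a b : R, δ i (a + b) = δ i a + δ i b) ∧
  (∀ r : R, δ 0 r = r) ∧
  (∀ i ≤ n, ∀ r s : R, δ i (r * s) = ∑ j ∈ range (i + 1), δ j r * δ (i - j) s)

/-- `d` is a `Δ`-higher derivation of order `n` on the right `R`-module `M`
(formalized as an `Rᵐᵒᵖ`-module, `x·r = op r • x`). -/
def IsDeltaHigherDerivationOfOrder {R M : Type*} [Ring R] [AddCommGroup M]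
    [Module Rᵐᵒᵖ M] (n : ℕ) (δ : ℕ → R → R) (d : ℕ → M → M) : Prop :=
  (∀ i ≤ n, ∀ x y : M, d i (x + y) = d i x + d i y) ∧
  (∀ x : M, d 0 x = x) ∧
  (∀ i ≤ n, ∀ (x : M) (r : R), d i (op r • x) = ∑ j ∈ range (i + 1), op (δ (i - j) r) • d j x)

/-- If `F` is a higher differential Gabriel filter of order `n`, then for every right
`R`-module `M`, every higher derivation `{δ_i}` of order `n`, every `Δ`-higher
derivation `{d_i}` of order `n` on `M`, and every `x ∈ M` with `ann_r(x) ∈ F`, also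
`ann_r(d_i x) ∈ F` for all `i ≤ n`; i.e. `d_i(𝕋(M)) ⊆ 𝕋(M)`. -/
theorem torsion_closed_of_higherDifferential {R : Type u} [Ring R]
    (F : Set (Set R))
    (hFtop : (Set.univ : Set R) ∈ F)
    (hFup : ∀ I ∈ F, ∀ J : Set R, I ⊆ J → J ∈ F)
    (hFinter : ∀ I ∈ F, ∀ J ∈ F, I ∩ J ∈ F)
    (hFquot : ∀ I ∈ F, ∀ r : R, {s : R | r * s ∈ I} ∈ F)
    (n : ℕ)
    (hHD : ∀ δ : ℕ → R → R, IsHigherDerivationOfOrder n δ →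
      ∀ I ∈ F, ∃ J ∈ F, ∀ i ≤ n, δ i '' J ⊆ I) :
    ∀ (M : Type u) [AddCommGroup M] [Module Rᵐᵒᵖ M]
      (δ : ℕ → R → R) (d : ℕ → M → M),
      IsHigherDerivationOfOrder n δ →
      IsDeltaHigherDerivationOfOrder n δ d →
      ∀ x : M, {r : R | op r • x = 0} ∈ F →
        ∀ i ≤ n, {r : R | op r • d i x = 0} ∈ F := by
  intro M _ _ δ d hδ hd x hx i
  induction i using Nat.strong_induction_on with
  | _ i ih =>
    intro hi
    -- K = ann(x) ∩ ⋂_{j<i} ann(d_j x), realized as finite intersection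
    have hK : ({r : R | op r • x = 0} ∩
        ⋂ j ∈ range i, {r : R | op r • d j x = 0}) ∈ F := by
      have : ∀ m : ℕ, m ≤ i → ({r : R | op r • x = 0} ∩
          ⋂ j ∈ range m, {r : R | op r • d j x = 0}) ∈ F := by
        intro m
        induction m with
        | zero => intro _; simpa using hx
        | succ m ihm =>
          intro hm
          have h1 := ihm (Nat.le_of_succ_le hm)
          have h2 : {r : R | op r • d m x = 0} ∈ F :=
            ih m (Nat.lt_of_succ_le hm) (le_trans (Nat.le_of_succ_le hm) hi)
          have := hFinter _ h1 _ h2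
          refine hFup _ this _ ?_
          intro r hr
          rcases hr with ⟨⟨hr1, hr2⟩, hr3⟩
          refine ⟨hr1, ?_⟩
          simp only [Set.mem_iInter, mem_range] at hr2 ⊢
          intro j hj
          rcases Nat.lt_succ_iff_lt_or_eq.mp hj with h | h
          · exact hr2 j h
          · subst h; exact hr3
      exact this i le_rfl
    obtain ⟨J, hJF, hJ⟩ := hHD δ hδ _ hK
    refine hFup J hJF _ ?_
    intro r hr
    have hrK : ∀ k ≤ n, δ k r ∈ ({r : R | op r • x = 0} ∩
        ⋂ j ∈ range i, {r : R | op r • d j x = 0}) := fun k hk =>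
      hJ k hk ⟨r, hr, rfl⟩
    -- op r • x = 0, since δ 0 r = r
    have hr0 : op r • x = 0 := by
      have := (hrK 0 (Nat.zero_le n)).1
      rwa [hδ.2.1 r] at this
    -- d i 0 = 0
    have hd0 : d i 0 = 0 := by
      have := hd.1 i hi 0 0
      simpa using this
    have key : (0 : M) = ∑ j ∈ range (i + 1), op (δ (i - j) r) • d j x := by
      have := hd.2.2 i hi x r
      rw [hr0, hd0] at this
      exact this
    rw [Finset.sum_range_succ] at key
    have hvanish : ∀ j ∈ range i, op (δ (i - j) r) • d j x = 0 := by
      intro j hj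
      have hjlt := mem_range.mp hj
      have hij : i - j ≤ n := le_trans (Nat.sub_le i j) hi
      have := (hrK (i - j) hij).2
      simp only [Set.mem_iInter, mem_range] at this
      exact this j hjlt
    rw [Finset.sum_eq_zero hvanish, zero_add, Nat.sub_self, hδ.2.1 r] at key
    exact key.symm
end
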